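/- Let A be a unital C*-algebra, let B be a C*-algebra, and let T : A → B be a continuous linear map which is a triple homomorphism at the unit 1 of A. Then {T(x*),T(1),T(1)} = {T(1),T(x),T(1)} for all x ∈ A. Consequently, e := T(1) is a partial isometry and the Peirce-1 component of T(x) relative to e vanishes for every x ∈ A, that is, e e* T(x) = e e* T(x) e* e and T(x) e* e = e e* T(x) e* e for all x ∈ A. -/

import Mathlib

/-- The C*-triple product `{a,b,c} = (1/2)(a b* c + c b* a)`. -/
noncomputable def trip {R : Type*} [NonUnitalRing R] [Module ℂ R] [Star R] (a b c : R) : R :=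
  (2 : ℂ)⁻¹ • (a * star b * c + c * star b * a)

private lemma expand_aux {B : Type*} [NonUnitalCStarAlgebra B] (e f p g u : B) (t : ℂ) :
    (e - t • p) * (f + t • g) * (e + (t * t) • u)
      + (e + (t * t) • u) * (f + t • g) * (e - t • p)
    = (e * f * e + e * f * e)
      + t • (e * g * e + e * g * e - p * f * e - e * f * p)
      + (t * t) • (e * f * u + u * f * e - p * g * e - e * g * p
          + t • (e * g * u + u * g * e - p * f * u - u * f * p)
          + (t * t) • (-(p * g * u) - u * g * p)) := by
  simp only [mul_add, add_mul, sub_mul, mul_sub, smul_mul_assoc, mul_smul_comm, smul_smul,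
    smul_add, smul_sub, smul_neg, mul_assoc]
  module


set_option maxHeartbeats 1600000 in
/-- If `T : A → B` is a continuous linear map between C*-algebras (`A` unital) which is a
triple homomorphism at the unit of `A`, then `{T(x*),T(1),T(1)} = {T(1),T(x),T(1)}` for all
`x ∈ A`; consequently `e := T(1)` is a partial isometry and the Peirce-1 component of every
`T(x)` relative to `e` vanishes: `e e* T(x) = e e* T(x) e* e` and
`T(x) e* e = e e* T(x) e* e`. -/
theorem stmt17 {A B : Type*} [CStarAlgebra A] [NonUnitalCStarAlgebra B] (T : A →ₗ[ℂ] B)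
    (hcont : Continuous T)
    (hT : ∀ a b c : A, trip a b c = 1 → trip (T a) (T b) (T c) = T 1) :
    (∀ x : A, trip (T (star x)) (T 1) (T 1) = trip (T 1) (T x) (T 1)) ∧
    T 1 * star (T 1) * T 1 = T 1 ∧
    (∀ x : A,
      T 1 * star (T 1) * T x = T 1 * star (T 1) * T x * star (T 1) * T 1 ∧
      T x * star (T 1) * T 1 = T 1 * star (T 1) * T x * star (T 1) * T 1) := by
  have h111 : trip (1 : A) 1 1 = 1 := by
    simp only [trip, star_one, mul_one, one_mul]
    rw [← two_smul ℂ (1 : A), smul_smul, inv_mul_cancel₀ two_ne_zero, one_smul]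
  have hpi : T 1 * star (T 1) * T 1 = T 1 := by
    have h := hT 1 1 1 h111
    simp only [trip] at h
    rw [← two_smul ℂ (T 1 * star (T 1) * T 1), smul_smul,
      inv_mul_cancel₀ two_ne_zero, one_smul] at h
    exact h
  -- the key vanishing statement
  have hK : ∀ x : A,
      T 1 * star (T x) * T 1 + T 1 * star (T x) * T 1
        - T (star x) * star (T 1) * T 1 - T 1 * star (T 1) * T (star x) = 0 := by
    intro x
    set e := T 1 with he
    set p := T (star x) with hp
    set q := T x with hq
    set f := star e with hf
    set g := star q with hg
    set K := e * g * e + e * g * e - p * f * e - e * f * p with hKdef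
    set t : ℕ → ℂ := fun n => ((n : ℂ))⁻¹ with htdef
    have hts : ∀ n, star (t n) = t n := fun n => by simp [htdef]
    set a : ℕ → A := fun n => (t n * t n) • (star x * star x) with hadef
    have ht0 : Filter.Tendsto t Filter.atTop (nhds 0) := by
      have h := tendsto_inv_atTop_nhds_zero_nat (𝕜 := ℝ)
      have h2 := (Complex.continuous_ofReal.tendsto 0).comp h
      refine h2.congr fun n => ?_
      simp [htdef, Function.comp]
    have ha0 : Filter.Tendsto a Filter.atTop (nhds 0) := by
      have := (ht0.mul ht0).smul_const (star x * star x)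
      simpa [hadef] using this
    set c : ℕ → A := fun n => Ring.inverse (1 - a n) with hcdef
    set u : ℕ → B := fun n => T (star x * star x * c n) with hudef
    set Gf : ℂ → B → B := fun s v =>
      e * f * v + v * f * e - p * g * e - e * g * p
        + s • (e * g * v + v * g * e - p * f * v - v * f * p)
        + (s * s) • (-(p * g * v) - v * g * p) with hGf
    have h_norm : ∀ᶠ n in Filter.atTop, ‖a n‖ < 1 / 2 :=
      ha0.norm.eventually_lt_const (by norm_num)
    have h_pos : ∀ᶠ n in Filter.atTop, (1 : ℕ) ≤ n := Filter.eventually_ge_atTop 1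
    -- basic facts about c n
    have hcfact : ∀ n, ‖a n‖ < 1 / 2 → c n = 1 + a n * c n ∧ ‖c n - 1‖ ≤ (2 * ‖(1 : A)‖) * ‖a n‖ := by
      intro n hn
      have hunit : IsUnit (1 - a n) := isUnit_one_sub_of_norm_lt_one (by linarith)
      have hc1 : (1 - a n) * c n = 1 := by
        simpa [hcdef] using Ring.mul_inverse_cancel _ hunit
      have hc3 : c n = 1 + a n * c n := by
        rw [sub_mul, one_mul] at hc1
        rw [sub_eq_iff_eq_add] at hc1
        exact hc1
      have hd : c n - 1 = a n * c n := by
        conv_lhs => rw [hc3]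
        abel
      have hcb : ‖c n‖ ≤ 2 * ‖(1 : A)‖ := by
        have h1 : ‖c n‖ ≤ ‖(1 : A)‖ + ‖a n‖ * ‖c n‖ := by
          calc ‖c n‖ = ‖1 + a n * c n‖ := by rw [← hc3]
          _ ≤ ‖(1 : A)‖ + ‖a n * c n‖ := norm_add_le _ _
          _ ≤ ‖(1 : A)‖ + ‖a n‖ * ‖c n‖ := by gcongr; exact norm_mul_le _ _
        nlinarith [norm_nonneg (c n), norm_nonneg (a n)]
      refine ⟨hc3, ?_⟩
      calc ‖c n - 1‖ = ‖a n * c n‖ := by rw [hd]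
      _ ≤ ‖a n‖ * ‖c n‖ := norm_mul_le _ _
      _ ≤ ‖a n‖ * (2 * ‖(1 : A)‖) := by gcongr
      _ = (2 * ‖(1 : A)‖) * ‖a n‖ := by ring
    -- the eventual identity
    have hev : ∀ᶠ n in Filter.atTop, K = (-(t n)) • Gf (t n) (u n) := by
      filter_upwards [h_norm, h_pos] with n hn1 hn2
      have htn : t n ≠ 0 := by
        simp only [htdef]
        exact inv_ne_zero (Nat.cast_ne_zero.mpr (by omega))
      have hunit : IsUnit (1 - a n) := isUnit_one_sub_of_norm_lt_one (by linarith)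
      have hc1 : (1 - a n) * c n = 1 := by
        simpa [hcdef] using Ring.mul_inverse_cancel _ hunit
      have hc2 : c n * (1 - a n) = 1 := by
        simpa [hcdef] using Ring.inverse_mul_cancel _ hunit
      have hc3 : c n = 1 + a n * c n := (hcfact n hn1).1
      have hab : (1 - t n • star x) * (1 + t n • star x) = 1 - a n := by
        simp only [hadef, mul_add, sub_mul, one_mul, mul_one,
          smul_mul_assoc, mul_smul_comm, smul_smul, smul_add, smul_sub]
        module
      have hba : (1 + t n • star x) * (1 - t n • star x) = 1 - a n := by
        simp only [hadef, mul_sub, add_mul, one_mul, mul_one,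
          smul_mul_assoc, mul_smul_comm, smul_smul, smul_add, smul_sub]
        module
      have htripA : trip (1 - t n • star x) (1 + t n • x) (c n) = 1 := by
        have hstar : star (1 + t n • x) = 1 + t n • star x := by
          simp [star_add, star_smul, hts n]
        simp only [trip, hstar]
        rw [show (1 - t n • star x) * (1 + t n • star x) * c n = (1 - a n) * c n by rw [hab]]
        rw [show c n * (1 + t n • star x) * (1 - t n • star x) = c n * (1 - a n) by
          rw [mul_assoc, hba]]
        rw [hc1, hc2]
        rw [← two_smul ℂ (1 : A), smul_smul, inv_mul_cancel₀ two_ne_zero, one_smul]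
      have hB := hT _ _ _ htripA
      have hTa : T (1 - t n • star x) = e - t n • p := by
        rw [map_sub, map_smul]
      have hTb : T (1 + t n • x) = e + t n • q := by
        rw [map_add, map_smul]
      have hTc : T (c n) = e + (t n * t n) • u n := by
        conv_lhs => rw [hc3]
        rw [map_add]
        congr 1
        rw [hadef]
        simp only [smul_mul_assoc]
        rw [map_smul]
      rw [hTa, hTb, hTc] at hB
      simp only [trip] at hB
      have hstarB : star (e + t n • q) = f + t n • g := by
        simp [hf, hg, star_add, star_smul, hts n]
      rw [hstarB] at hB
      have hL := congrArg (fun z => (2 : ℂ) • z) hB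
      simp only [smul_smul, mul_inv_cancel₀ (two_ne_zero (α := ℂ)), one_smul] at hL
      rw [expand_aux e f p g (u n) (t n)] at hL
      have hefe : e * f * e = e := hpi
      rw [hefe] at hL
      rw [two_smul] at hL
      rw [add_assoc] at hL
      have h0 : t n • K + (t n * t n) • Gf (t n) (u n) = 0 := by
        have := add_eq_left.mp hL
        simpa [hKdef, hGf] using this
      have h1 : t n • K = -((t n * t n) • Gf (t n) (u n)) :=
        eq_neg_of_add_eq_zero_left h0
      rw [← neg_smul, ← mul_neg, ← smul_smul] at h1
      exact smul_right_injective B htn h1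
    -- limits
    have hc_lim : Filter.Tendsto c Filter.atTop (nhds 1) := by
      have hsq : Filter.Tendsto (fun n => c n - 1) Filter.atTop (nhds 0) := by
        refine squeeze_zero_norm' (a := fun n => (2 * ‖(1 : A)‖) * ‖a n‖) ?_ ?_
        · filter_upwards [h_norm] with n hn
          exact (hcfact n hn).2
        · have := ha0.norm.const_mul (2 * ‖(1 : A)‖)
          simpa using this
      have := hsq.add_const 1
      simpa using this
    have hu_lim : Filter.Tendsto u Filter.atTop (nhds (T (star x * star x))) := by
      have h1 : Filter.Tendsto (fun n => star x * star x * c n) Filter.atTop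
          (nhds (star x * star x)) := by
        have := hc_lim.const_mul (star x * star x)
        simpa using this
      exact (hcont.tendsto _).comp h1
    have hGcont : Continuous (fun sv : ℂ × B => Gf sv.1 sv.2) := by
      simp only [hGf]
      fun_prop
    have hF : Filter.Tendsto (fun n => Gf (t n) (u n)) Filter.atTop
        (nhds (Gf 0 (T (star x * star x)))) :=
      (hGcont.tendsto _).comp (ht0.prodMk_nhds hu_lim)
    have hG0 : Filter.Tendsto (fun n => (-(t n)) • Gf (t n) (u n)) Filter.atTop (nhds 0) := by
      have := ht0.neg.smul hF
      simpa using this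
    have hKe : K = 0 := tendsto_nhds_unique (tendsto_const_nhds.congr' (hev.mono fun n h => h)) hG0
    simpa [hKdef] using hKe
  -- part 1
  have hmain : ∀ x : A, trip (T (star x)) (T 1) (T 1) = trip (T 1) (T x) (T 1) := by
    intro x
    have h := hK x
    rw [sub_sub, sub_eq_zero] at h
    simp only [trip]
    rw [← h]
  refine ⟨hmain, hpi, fun x => ?_⟩
  have hD0 := hmain (star x)
  rw [star_star] at hD0
  simp only [trip] at hD0
  have hD : T x * star (T 1) * T 1 + T 1 * star (T 1) * T x
      = T 1 * star (T (star x)) * T 1 + T 1 * star (T (star x)) * T 1 :=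
    smul_right_injective B (inv_ne_zero (two_ne_zero (α := ℂ))) hD0
  set e := T 1 with he
  set X := T x with hX
  set Y := star (T (star x)) with hY
  set f := star e with hf
  have hpi' : e * (f * e) = e := by rw [← mul_assoc]; exact hpi
  have hD' : X * (f * e) + e * (f * X) = e * (Y * e) + e * (Y * e) := by
    simpa only [mul_assoc] using hD
  have hfold : ∀ Z : B, e * (f * (e * Z)) = e * Z := fun Z => by
    rw [← mul_assoc, ← mul_assoc, hpi]
  constructor
  · -- e*f*X = e*f*X*f*e
    have h1 := congrArg (fun z => z * (f * e)) hD'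
    simp only [add_mul, mul_assoc] at h1
    simp only [hpi'] at h1
    -- h1 : X*(f*e) + e*(f*(X*(f*e))) = e*(Y*e) + e*(Y*e)
    have h2 := h1.trans hD'.symm
    have h3 := add_left_cancel h2
    -- h3 : e*(f*(X*(f*e))) = e*(f*X)
    simp only [mul_assoc]
    exact h3.symm
  · -- X*f*e = e*f*X*f*e
    have h1 := congrArg (fun z => e * (f * z)) hD'
    simp only [mul_add] at h1
    simp only [hfold] at h1
    -- h1 : e*(f*(X*(f*e))) + e*(f*X) = e*(Y*e) + e*(Y*e)
    have h2 := h1.trans hD'.symm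
    have h3 := add_right_cancel h2
    -- h3 : e*(f*(X*(f*e))) = X*(f*e)
    simp only [mul_assoc]
    exact h3.symm
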